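/- Let p, q be positive integers and let β₁ > 1 be the unique real with β₁^{−p} + β₁^{−q} = 1. Let k be a positive integer with 1 ≤ k < max(p,q), and let β₂ > 1 be the unique real with β₂^{−1} + β₂^{−k} = 1. Then β₁ < β₂. -/

import Mathlib

theorem stmt_16 (p q k : ℕ) (hp : 0 < p) (hq : 0 < q) (hk : 1 ≤ k) (hkm : k < max p q)
    (β₁ β₂ : ℝ) (hβ₁ : 1 < β₁) (h1 : 1 / β₁ ^ p + 1 / β₁ ^ q = 1)
    (hβ₂ : 1 < β₂) (h2 : 1 / β₂ + 1 / β₂ ^ k = 1) :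
    β₁ < β₂ := by
  by_contra hcon
  push_neg at hcon
  have hb2 : (0:ℝ) < β₂ := lt_trans one_pos hβ₂
  have hb1 : (0:ℝ) < β₁ := lt_trans one_pos hβ₁
  have key : ∀ a b : ℕ, 1 ≤ a → k < b →
      1 / β₁ ^ a + 1 / β₁ ^ b < 1 / β₂ + 1 / β₂ ^ k := by
    intro a b ha hb
    have h1a : 1 / β₁ ^ a ≤ 1 / β₂ ^ a :=
      one_div_le_one_div_of_le (pow_pos hb2 a) (pow_le_pow_left₀ hb2.le hcon a)
    have h2a : 1 / β₂ ^ a ≤ 1 / β₂ := by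
      rw [show (1/β₂ : ℝ) = 1 / β₂ ^ 1 by rw [pow_one]]
      exact one_div_le_one_div_of_le (pow_pos hb2 1)
        (pow_le_pow_right₀ hβ₂.le ha)
    have h1b : 1 / β₁ ^ b ≤ 1 / β₂ ^ b :=
      one_div_le_one_div_of_le (pow_pos hb2 b) (pow_le_pow_left₀ hb2.le hcon b)
    have h2b : 1 / β₂ ^ b < 1 / β₂ ^ k :=
      one_div_lt_one_div_of_lt (pow_pos hb2 k) (pow_lt_pow_right₀ hβ₂ hb)
    linarith
  rcases le_total p q with hpq | hpq
  · have := key p q hp (by simpa [max_eq_right hpq] using hkm)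
    linarith
  · have := key q p hq (by simpa [max_eq_left hpq] using hkm)
    linarith
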